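/- Let a < b be real numbers, let a = t_0 < t_1 < ⋯ < t_N = b be a partition of [a,b] with mesh size max_i (t_i − t_{i−1}) ≤ h, and let f : ℝ → ℝ be measurable, integrable on (a,b), and of finite pointwise total variation V on [a,b] (V is the supremum over all finite increasing sequences a ≤ s_0 < ⋯ < s_K ≤ b of ∑_k |f(s_{k+1}) − f(s_k)|). Let P_h f be the piecewise constant function whose value on (t_{i−1}, t_i) is the mean m_i = (t_i − t_{i−1})^{−1} ∫_{t_{i−1}}^{t_i} f. Then ∫_a^b |f(x) − (P_h f)(x)| dx ≤ h · V. -/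

import Mathlib

open MeasureTheory

section Helpers

open Set

variable {f : ℝ → ℝ}



lemma phi_intervalIntegrable {c d : ℝ} (hcd : c < d)
    (hfi : IntervalIntegrable f volume c d) :
    IntervalIntegrable (fun u => f (c + (d - c) * u)) volume 0 1 := by
  have h0 := (hfi.comp_add_left c).comp_mul_left (c := d - c)
  have hne : d - c ≠ 0 := sub_ne_zero.2 hcd.ne'
  simpa [hne] using h0

lemma phi_integrableOn {c d : ℝ} (hcd : c < d)
    (hfi : IntegrableOn f (Set.Ioc c d)) :
    IntegrableOn (fun u => f (c + (d - c) * u)) (Set.Ioc (0:ℝ) 1) := by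
  have h1 : IntervalIntegrable f volume c d :=
    (intervalIntegrable_iff_integrableOn_Ioc_of_le hcd.le).2 hfi
  exact (intervalIntegrable_iff_integrableOn_Ioc_of_le zero_le_one).1
    (phi_intervalIntegrable hcd h1)

lemma subst_eq {c d : ℝ} (hcd : c < d) (g : ℝ → ℝ) :
    ∫ x in c..d, g x = (d - c) * ∫ u in (0:ℝ)..1, g (c + (d - c) * u) := by
  have h := intervalIntegral.smul_integral_comp_add_mul (a := 0) (b := 1) g (d - c) c
  rw [smul_eq_mul] at h
  rw [h]
  norm_num


lemma G_measurable {c d : ℝ} (hfm : Measurable f) :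
    StronglyMeasurable (fun u => ∫ v in Set.Ioc (0:ℝ) 1,
      |f (c + (d - c) * u) - f (c + (d - c) * v)|) := by
  have hφm : Measurable (fun u : ℝ => f (c + (d - c) * u)) :=
    hfm.comp (measurable_const.add (measurable_const.mul measurable_id))
  have hFm : StronglyMeasurable (fun p : ℝ × ℝ =>
      |f (c + (d - c) * p.1) - f (c + (d - c) * p.2)|) :=
    (((hφm.comp measurable_fst).sub (hφm.comp measurable_snd)).abs).stronglyMeasurable
  exact hFm.integral_prod_right'

lemma const_intOn {s : Set ℝ} (hs : MeasurableSet s) (hfin : volume s < ⊤) (C : ℝ) :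
    IntegrableOn (fun _ : ℝ => C) s := by
  exact integrableOn_const hfin.ne

lemma G_integrable {c d : ℝ} (hcd : c < d) (hfm : Measurable f)
    (hfi : IntegrableOn f (Set.Ioc c d)) :
    IntegrableOn (fun u => ∫ v in Set.Ioc (0:ℝ) 1,
      |f (c + (d - c) * u) - f (c + (d - c) * v)|) (Set.Ioc (0:ℝ) 1) := by
  set φ : ℝ → ℝ := fun u => f (c + (d - c) * u) with hφ
  have hφi : IntegrableOn φ (Set.Ioc (0:ℝ) 1) := phi_integrableOn hcd hfi
  have hfin : volume (Set.Ioc (0:ℝ) 1) < ⊤ := measure_Ioc_lt_top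
  set C : ℝ := ∫ v in Set.Ioc (0:ℝ) 1, |φ v| with hC
  apply Integrable.mono' (g := fun u => |φ u| + C)
  · exact hφi.abs.add (const_intOn measurableSet_Ioc hfin C)
  · exact (G_measurable hfm).aestronglyMeasurable
  · refine Filter.Eventually.of_forall (fun u => ?_)
    have h0 : 0 ≤ ∫ v in Set.Ioc (0:ℝ) 1, |φ u - φ v| :=
      integral_nonneg fun v => abs_nonneg _
    rw [Real.norm_eq_abs, abs_of_nonneg h0]
    have h1 : Integrable (fun v => |φ u - φ v|) (volume.restrict (Set.Ioc (0:ℝ) 1)) :=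
      ((const_intOn measurableSet_Ioc hfin (φ u)).sub hφi).abs
    have h2 : Integrable (fun v => |φ u| + |φ v|) (volume.restrict (Set.Ioc (0:ℝ) 1)) :=
      (const_intOn measurableSet_Ioc hfin (|φ u|)).add hφi.abs
    calc ∫ v in Set.Ioc (0:ℝ) 1, |φ u - φ v|
        ≤ ∫ v in Set.Ioc (0:ℝ) 1, (|φ u| + |φ v|) :=
          integral_mono h1 h2 (fun v => abs_sub _ _)
      _ = |φ u| + C := by
          rw [integral_add (const_intOn measurableSet_Ioc hfin (|φ u|)) hφi.abs,
            setIntegral_const]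
          simp [Real.volume_Ioc, hC]
lemma cell_bound {c d : ℝ} (hcd : c < d) (hfm : Measurable f)
    (hfi : IntegrableOn f (Set.Ioc c d)) :
    (∫ x in Set.Ioc c d, |f x - (d - c)⁻¹ * ∫ y in c..d, f y|)
      ≤ (d - c) * ∫ u in Set.Ioc (0:ℝ) 1, ∫ v in Set.Ioc (0:ℝ) 1,
          |f (c + (d - c) * u) - f (c + (d - c) * v)| := by
  have hΔ : (0:ℝ) < d - c := sub_pos.2 hcd
  set φ : ℝ → ℝ := fun u => f (c + (d - c) * u) with hφdef
  have hφi : IntegrableOn φ (Set.Ioc (0:ℝ) 1) := phi_integrableOn hcd hfi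
  have hfin : volume (Set.Ioc (0:ℝ) 1) < ⊤ := measure_Ioc_lt_top
  set m : ℝ := (d - c)⁻¹ * ∫ y in c..d, f y with hmdef
  have hm : m = ∫ v in Set.Ioc (0:ℝ) 1, φ v := by
    rw [hmdef, subst_eq hcd f, inv_mul_cancel_left₀ hΔ.ne',
      intervalIntegral.integral_of_le zero_le_one]
  have key : ∀ u : ℝ, |φ u - m| ≤ ∫ v in Set.Ioc (0:ℝ) 1, |φ u - φ v| := by
    intro u
    have heq : φ u - m = ∫ v in Set.Ioc (0:ℝ) 1, (φ u - φ v) := by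
      rw [integral_sub (const_intOn measurableSet_Ioc hfin (φ u)) hφi,
        setIntegral_const, hm]
      simp [Real.volume_Ioc]
    rw [heq]
    simpa [Real.norm_eq_abs] using
      norm_integral_le_integral_norm (μ := volume.restrict (Set.Ioc (0:ℝ) 1))
        (fun v => φ u - φ v)
  have hout : (∫ x in Set.Ioc c d, |f x - m|)
      = (d - c) * ∫ u in Set.Ioc (0:ℝ) 1, |φ u - m| := by
    rw [← intervalIntegral.integral_of_le hcd.le,
      subst_eq hcd (fun x => |f x - m|),
      intervalIntegral.integral_of_le zero_le_one]
  rw [hout]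
  refine mul_le_mul_of_nonneg_left ?_ hΔ.le
  exact setIntegral_mono_on ((hφi.sub (const_intOn measurableSet_Ioc hfin m)).abs)
    (G_integrable hcd hfm hfi) measurableSet_Ioc (fun u _ => key u)
lemma pairs_le (a b V : ℝ) (hab : a < b) (N : ℕ) (hN : 1 ≤ N)
    (t : ℕ → ℝ) (ht0 : t 0 = a) (htN : t N = b)
    (hmono : ∀ i < N, t i < t (i + 1))
    (hV : ∀ (K : ℕ) (s : ℕ → ℝ), (∀ k < K, s k < s (k + 1)) →
      a ≤ s 0 → s K ≤ b →
      ∑ k ∈ Finset.range K, |f (s (k + 1)) - f (s k)| ≤ V)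
    {u v : ℝ} (hu : u ∈ Set.Ioc (0:ℝ) 1) (hv : v ∈ Set.Ioc (0:ℝ) 1) :
    ∑ k ∈ Finset.range N,
      |f (t k + (t (k + 1) - t k) * u) - f (t k + (t (k + 1) - t k) * v)| ≤ V := by
  have step : ∀ j, ∀ i, i ≤ j → j ≤ N → t i ≤ t j := by
    intro j
    induction j with
    | zero => intro i hi _; simp [Nat.le_zero.mp hi]
    | succ n ih =>
      intro i hi hN'
      rcases Nat.eq_or_lt_of_le hi with rfl | hlt
      · exact le_refl _
      · exact (ih i (by omega) (by omega)).trans (hmono n (by omega)).le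
  have hV0 : 0 ≤ V := by
    have := hV 0 (fun _ => a) (fun k hk => absurd hk (Nat.not_lt_zero k)) le_rfl hab.le
    simpa using this
  -- auxiliary: the case of ordered parameters 0 < p < q ≤ 1
  have aux : ∀ p q : ℝ, 0 < p → q ≤ 1 → p < q →
      ∑ k ∈ Finset.range N,
        |f (t k + (t (k + 1) - t k) * q) - f (t k + (t (k + 1) - t k) * p)| ≤ V := by
    intro p q hp hq1 hpq
    set s : ℕ → ℝ := fun j =>
      t (j / 2) + (t (j / 2 + 1) - t (j / 2)) * (if j % 2 = 0 then p else q) with hsdef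
    have hs_even : ∀ k, s (2 * k) = t k + (t (k + 1) - t k) * p := by
      intro k
      simp only [hsdef]
      rw [show (2 * k) / 2 = k by omega, show (2 * k) % 2 = 0 by omega]
      simp
    have hs_odd : ∀ k, s (2 * k + 1) = t k + (t (k + 1) - t k) * q := by
      intro k
      simp only [hsdef]
      rw [show (2 * k + 1) / 2 = k by omega, show (2 * k + 1) % 2 = 1 by omega]
      simp
    have hΔ : ∀ k < N, (0:ℝ) < t (k + 1) - t k := fun k hk => sub_pos.2 (hmono k hk)
    have hsmono : ∀ j < 2 * N - 1, s j < s (j + 1) := by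
      intro j hj
      rcases Nat.even_or_odd j with ⟨k, hk⟩ | ⟨k, hk⟩
      · have hk2 : j = 2 * k := by omega
        subst hk2
        have hkN : k < N := by omega
        rw [hs_even k, show 2 * k + 1 = 2 * k + 1 from rfl, hs_odd k]
        exact add_lt_add_right (mul_lt_mul_of_pos_left hpq (hΔ k hkN)) _
      · have hk2 : j = 2 * k + 1 := by omega
        subst hk2
        have hkN : k + 1 < N := by omega
        rw [hs_odd k, show 2 * k + 1 + 1 = 2 * (k + 1) by ring, hs_even (k + 1)]
        have h1 : t k + (t (k + 1) - t k) * q ≤ t (k + 1) := by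
          have := mul_le_of_le_one_right (hΔ k (by omega)).le hq1
          linarith
        have h2 : t (k + 1) < t (k + 1) + (t (k + 2) - t (k + 1)) * p :=
          lt_add_of_pos_right _ (mul_pos (hΔ (k + 1) hkN) hp)
        linarith
    have ha0 : a ≤ s 0 := by
      have : s 0 = t 0 + (t 1 - t 0) * p := by simpa using hs_even 0
      rw [this, ← ht0]
      have h3 : (0:ℝ) < (t 1 - t 0) * p := mul_pos (hΔ 0 (by omega)) hp
      linarith
    have hbK : s (2 * N - 1) ≤ b := by
      have h2N : 2 * N - 1 = 2 * (N - 1) + 1 := by omega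
      rw [h2N, hs_odd (N - 1), show N - 1 + 1 = N by omega]
      have h4 := mul_le_of_le_one_right (hΔ (N - 1) (by omega)).le hq1
      rw [show N - 1 + 1 = N by omega] at h4
      rw [← htN]
      linarith
    have hmain := hV (2 * N - 1) s hsmono ha0 hbK
    refine le_trans ?_ hmain
    have hrw : ∀ k ∈ Finset.range N,
        |f (t k + (t (k + 1) - t k) * q) - f (t k + (t (k + 1) - t k) * p)|
          = |f (s (2 * k + 1)) - f (s (2 * k))| := by
      intro k _
      rw [hs_even k, hs_odd k]
    rw [Finset.sum_congr rfl hrw]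
    have himg : ∑ k ∈ Finset.range N, |f (s (2 * k + 1)) - f (s (2 * k))|
        = ∑ j ∈ (Finset.range N).image (fun k => 2 * k), |f (s (j + 1)) - f (s j)| := by
      rw [Finset.sum_image (fun x _ y _ hxy => by omega)]
    rw [himg]
    refine Finset.sum_le_sum_of_subset_of_nonneg ?_ (fun j _ _ => abs_nonneg _)
    intro j hj
    simp only [Finset.mem_image, Finset.mem_range] at hj ⊢
    obtain ⟨k, hk, rfl⟩ := hj
    omega
  rcases lt_trichotomy u v with hlt | rfl | hgt
  · have := aux u v hu.1 hv.2 hlt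
    refine le_trans (le_of_eq ?_) this
    exact Finset.sum_congr rfl fun k _ => abs_sub_comm _ _
  · simpa using hV0
  · exact aux v u hv.1 hu.2 hgt
end Helpers

/-- The piecewise constant local average of `f` on the partition
`a = t 0 < t 1 < ⋯ < t N = b`. -/
noncomputable def locAvg (t : ℕ → ℝ) (N : ℕ) (f : ℝ → ℝ) : ℝ → ℝ :=
  fun x => ∑ i ∈ Finset.Icc 1 N,
    Set.indicator (Set.Ioc (t (i - 1)) (t i))
      (fun _ => (t i - t (i - 1))⁻¹ * ∫ y in (t (i - 1))..(t i), f y) x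

theorem L1_local_average_error_le_h_tv
    (a b : ℝ) (hab : a < b) (N : ℕ) (hN : 1 ≤ N)
    (t : ℕ → ℝ) (ht0 : t 0 = a) (htN : t N = b)
    (hmono : ∀ i < N, t i < t (i + 1))
    (h : ℝ) (hmesh : ∀ i ∈ Finset.Icc 1 N, t i - t (i - 1) ≤ h)
    (f : ℝ → ℝ) (hfm : Measurable f)
    (hfi : IntegrableOn f (Set.Ioo a b))
    (V : ℝ)
    (hV : ∀ (K : ℕ) (s : ℕ → ℝ), (∀ k < K, s k < s (k + 1)) →
      a ≤ s 0 → s K ≤ b →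
      ∑ k ∈ Finset.range K, |f (s (k + 1)) - f (s k)| ≤ V) :
    (∫ x in a..b, |f x - locAvg t N f x|) ≤ h * V := by
  have step : ∀ j, ∀ i, i ≤ j → j ≤ N → t i ≤ t j := by
    intro j
    induction j with
    | zero => intro i hi _; simp [Nat.le_zero.mp hi]
    | succ n ih =>
      intro i hi hN'
      rcases Nat.eq_or_lt_of_le hi with rfl | hlt
      · exact le_refl _
      · exact (ih i (by omega) (by omega)).trans (hmono n (by omega)).le
  have hfI : IntegrableOn f (Set.Ioc a b) := by
    have hre : volume.restrict (Set.Ioc a b) = volume.restrict (Set.Ioo a b) :=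
      (Measure.restrict_congr_set MeasureTheory.Ioo_ae_eq_Ioc).symm
    unfold IntegrableOn
    rw [hre]
    exact hfi
  have hfk : ∀ k < N, IntegrableOn f (Set.Ioc (t k) (t (k + 1))) := by
    intro k hk
    refine hfI.mono_set (Set.Ioc_subset_Ioc ?_ ?_)
    · rw [← ht0]; exact step k 0 (Nat.zero_le k) (by omega)
    · rw [← htN]; exact step N (k + 1) (by omega) le_rfl
  set m : ℕ → ℝ := fun k => (t (k + 1) - t k)⁻¹ * ∫ y in (t k)..(t (k + 1)), f y with hmdef
  have hloc : ∀ k < N, ∀ x ∈ Set.Ioc (t k) (t (k + 1)), locAvg t N f x = m k := by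
    intro k hk x hx
    unfold locAvg
    rw [Finset.sum_eq_single (k + 1)]
    · have : (k + 1 : ℕ) - 1 = k := by omega
      rw [this, Set.indicator_of_mem hx]
    · intro j hj hjne
      apply Set.indicator_of_notMem
      intro hxj
      obtain ⟨hj1, hjN⟩ := Finset.mem_Icc.mp hj
      rcases lt_or_gt_of_ne hjne with hlt | hgt
      · have hle : t j ≤ t k := step k j (by omega) (by omega)
        have := hxj.2
        have := hx.1
        linarith
      · have hle : t (k + 1) ≤ t (j - 1) := step (j - 1) (k + 1) (by omega) (by omega)
        have := hxj.1
        have := hx.2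
        linarith
    · intro hne
      exact absurd (Finset.mem_Icc.mpr ⟨by omega, by omega⟩) hne
  set F : ℝ → ℝ := fun x => |f x - locAvg t N f x| with hFdef
  have hmI : ∀ k < N, IntegrableOn (fun x => |f x - m k|) (Set.Ioc (t k) (t (k + 1))) := by
    intro k hk
    exact ((hfk k hk).sub (const_intOn measurableSet_Ioc measure_Ioc_lt_top (m k))).abs
  have hFint : ∀ k < N, IntervalIntegrable F volume (t k) (t (k + 1)) := by
    intro k hk
    rw [intervalIntegrable_iff_integrableOn_Ioc_of_le (hmono k hk).le]
    exact (hmI k hk).congr_fun (fun x hx => by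
      simp only [hFdef, hloc k hk x hx]) measurableSet_Ioc
  have hdecomp : (∫ x in a..b, F x)
      = ∑ k ∈ Finset.range N, ∫ x in (t k)..(t (k + 1)), F x := by
    rw [intervalIntegral.sum_integral_adjacent_intervals hFint, ht0, htN]
  set G : ℕ → ℝ → ℝ := fun k u => ∫ v in Set.Ioc (0:ℝ) 1,
    |f (t k + (t (k + 1) - t k) * u) - f (t k + (t (k + 1) - t k) * v)| with hGdef
  set I : ℕ → ℝ := fun k => ∫ u in Set.Ioc (0:ℝ) 1, G k u with hIdef
  have hInonneg : ∀ k, 0 ≤ I k :=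
    fun k => integral_nonneg fun u => integral_nonneg fun v => abs_nonneg _
  have hcell : ∀ k < N, (∫ x in (t k)..(t (k + 1)), F x) ≤ (t (k + 1) - t k) * I k := by
    intro k hk
    rw [intervalIntegral.integral_of_le (hmono k hk).le]
    have heq : (∫ x in Set.Ioc (t k) (t (k + 1)), F x)
        = ∫ x in Set.Ioc (t k) (t (k + 1)), |f x - m k| :=
      setIntegral_congr_fun measurableSet_Ioc
        (fun x hx => by simp only [hFdef, hloc k hk x hx])
    rw [heq]
    exact cell_bound (hmono k hk) hfm (hfk k hk)
  have hmesh' : ∀ k < N, t (k + 1) - t k ≤ h := by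
    intro k hk
    have := hmesh (k + 1) (Finset.mem_Icc.mpr ⟨by omega, by omega⟩)
    simpa using this
  have hhpos : 0 < h := by
    have h1 : (0:ℝ) < t 1 - t 0 := sub_pos.2 (hmono 0 (by omega))
    have h2 := hmesh' 0 (by omega)
    linarith
  have hsum1 : (∫ x in a..b, F x) ≤ h * ∑ k ∈ Finset.range N, I k := by
    rw [hdecomp, Finset.mul_sum]
    refine Finset.sum_le_sum fun k hk => ?_
    have hk' := Finset.mem_range.mp hk
    exact (hcell k hk').trans
      (mul_le_mul_of_nonneg_right (hmesh' k hk') (hInonneg k))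
  have hGint : ∀ k < N, IntegrableOn (G k) (Set.Ioc (0:ℝ) 1) := by
    intro k hk
    exact G_integrable (hmono k hk) hfm (hfk k hk)
  have hsumI : ∑ k ∈ Finset.range N, I k ≤ V := by
    have hswap : ∑ k ∈ Finset.range N, I k
        = ∫ u in Set.Ioc (0:ℝ) 1, ∑ k ∈ Finset.range N, G k u := by
      rw [integral_finset_sum _ (fun k hk => hGint k (Finset.mem_range.mp hk))]
    rw [hswap]
    have hfin : volume (Set.Ioc (0:ℝ) 1) < ⊤ := measure_Ioc_lt_top
    have hVconst : (∫ _ in Set.Ioc (0:ℝ) 1, V) = V := by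
      rw [setIntegral_const]; simp [Real.volume_Ioc]
    rw [← hVconst]
    refine setIntegral_mono_on
      (integrable_finset_sum _ (fun k hk => hGint k (Finset.mem_range.mp hk)))
      (const_intOn measurableSet_Ioc hfin V) measurableSet_Ioc (fun u hu => ?_)
    -- for fixed u ∈ Ioc 0 1: ∑ G k u ≤ V
    have hφint : ∀ k < N, Integrable (fun v => f (t k + (t (k + 1) - t k) * v))
        (volume.restrict (Set.Ioc (0:ℝ) 1)) :=
      fun k hk => phi_integrableOn (hmono k hk) (hfk k hk)
    have hinner : ∑ k ∈ Finset.range N, G k u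
        = ∫ v in Set.Ioc (0:ℝ) 1, ∑ k ∈ Finset.range N,
            |f (t k + (t (k + 1) - t k) * u) - f (t k + (t (k + 1) - t k) * v)| := by
      refine (integral_finset_sum (Finset.range N)
        (f := fun k v => |f (t k + (t (k + 1) - t k) * u)
          - f (t k + (t (k + 1) - t k) * v)|) (fun k hk => ?_)).symm
      exact ((const_intOn measurableSet_Ioc hfin _).sub
        (hφint k (Finset.mem_range.mp hk))).abs
    rw [hinner]
    have hVconst2 : (∫ _ in Set.Ioc (0:ℝ) 1, V) = V := hVconst
    rw [← hVconst2]
    refine setIntegral_mono_on ?_ (const_intOn measurableSet_Ioc hfin V)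
      measurableSet_Ioc (fun v hv => ?_)
    · exact integrable_finset_sum _ (fun k hk =>
        ((const_intOn measurableSet_Ioc hfin _).sub
          (hφint k (Finset.mem_range.mp hk))).abs)
    · exact pairs_le a b V hab N hN t ht0 htN hmono hV hu hv
  calc (∫ x in a..b, |f x - locAvg t N f x|) = ∫ x in a..b, F x := rfl
    _ ≤ h * ∑ k ∈ Finset.range N, I k := hsum1
    _ ≤ h * V := mul_le_mul_of_nonneg_left hsumI hhpos.le
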